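/- arXiv:1502.00711 — 2 statements merged into one kernel-verified Lean document; each statement's English description precedes it below -/
import Mathlib

section
/- Let (Y_k) be a sequence of nonnegative random variables with P(Y_k > x) ≤ A p^x for all x > 0, where A > 0 and 0 < p < 1. Then almost surely limsup_{k→∞} (∑_{i=1}^{k} Y_i) / (k log k) ≤ 2 / log(1/p). -/
open MeasureTheory Filter

theorem stmt2 {Ω : Type*} [MeasurableSpace Ω] (P : Measure Ω) [IsProbabilityMeasure P]
    (Y : ℕ → Ω → ℝ) (A p : ℝ) (hA : 0 < A) (hp : 0 < p) (hp1 : p < 1)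
    (hmeas : ∀ k, Measurable (Y k))
    (hnonneg : ∀ k ω, 0 ≤ Y k ω)
    (htail : ∀ k, ∀ x : ℝ, 0 < x → P {ω | Y k ω > x} ≤ ENNReal.ofReal (A * p ^ x)) :
    ∀ᵐ ω ∂P,
      Filter.limsup (fun k : ℕ => (∑ i ∈ Finset.Icc 1 k, Y i ω) / (k * Real.log k)) atTop
        ≤ 2 / Real.log (1 / p) := by
  set L := Real.log (1 / p) with hLdef
  have hL : 0 < L := Real.log_pos (one_lt_one_div hp hp1)
  set s : ℕ → Set Ω := fun k => {ω | Y k ω > 2 / L * Real.log k} with hs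
  -- tail bound for k ≥ 2
  have hbound : ∀ k : ℕ, 2 ≤ k → P (s k) ≤ ENNReal.ofReal (A * (k : ℝ) ^ (-2 : ℝ)) := by
    intro k hk
    have hk1 : (1 : ℝ) < (k : ℝ) := by exact_mod_cast Nat.lt_of_lt_of_le one_lt_two hk
    have hk0 : (0 : ℝ) < (k : ℝ) := lt_trans one_pos hk1
    have hlogk : 0 < Real.log k := Real.log_pos hk1
    have hx : 0 < 2 / L * Real.log k := by positivity
    refine (htail k _ hx).trans (le_of_eq ?_)
    congr 1
    congr 1
    rw [Real.rpow_def_of_pos hp]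
    have hlogp : Real.log p = -L := by
      rw [hLdef, one_div, Real.log_inv, neg_neg]
    rw [hlogp]
    have harg : -L * (2 / L * Real.log k) = (-2 : ℝ) * Real.log k := by
      field_simp
    rw [harg, ← Real.log_rpow hk0, Real.exp_log (Real.rpow_pos_of_pos hk0 _)]
  -- summability
  have hsummable : Summable (fun k : ℕ => A * ((k : ℝ) + 2) ^ (-2 : ℝ)) := by
    apply Summable.mul_left
    have h2 : Summable (fun n : ℕ => (n : ℝ) ^ (-2 : ℝ)) :=
      Real.summable_nat_rpow.2 (by norm_num)
    have h3 := (summable_nat_add_iff 2).2 h2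
    apply h3.congr
    intro n
    push_cast
    ring
  have hsum : (∑' k, P (s k)) ≠ ⊤ := by
    rw [← Summable.sum_add_tsum_nat_add' (f := fun k => P (s k)) (k := 2) ENNReal.summable]
    apply ENNReal.add_ne_top.2
    constructor
    · exact (ENNReal.sum_lt_top.mpr fun i _ => measure_lt_top P _).ne
    · have hle : (∑' k : ℕ, P (s (k + 2))) ≤
          ∑' k : ℕ, ENNReal.ofReal (A * ((k : ℝ) + 2) ^ (-2 : ℝ)) := by
        apply ENNReal.tsum_le_tsum
        intro k
        have := hbound (k + 2) (by omega)
        convert this using 3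
        push_cast
        ring
      refine ne_top_of_le_ne_top ?_ hle
      rw [← ENNReal.ofReal_tsum_of_nonneg (fun n => by positivity) hsummable]
      exact ENNReal.ofReal_ne_top
  have hae := MeasureTheory.ae_eventually_notMem (μ := P) hsum
  filter_upwards [hae] with ω hω
  obtain ⟨N, hN⟩ := eventually_atTop.mp hω
  have hNle : ∀ k, N ≤ k → Y k ω ≤ 2 / L * Real.log k := by
    intro k hk
    have := hN k hk
    simpa [hs] using this
  set C : ℝ := ∑ i ∈ Finset.Icc 1 N, Y i ω with hC
  -- the upper bound sequence
  have hD : Tendsto (fun k : ℕ => (k : ℝ) * Real.log k) atTop atTop :=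
    tendsto_natCast_atTop_atTop.atTop_mul_atTop₀
      (Real.tendsto_log_atTop.comp tendsto_natCast_atTop_atTop)
  have hg : Tendsto (fun k : ℕ => C / ((k : ℝ) * Real.log k) + 2 / L) atTop
      (nhds (2 / L)) := by
    have h0 : Tendsto (fun k : ℕ => C / ((k : ℝ) * Real.log k)) atTop (nhds 0) :=
      Tendsto.div_atTop tendsto_const_nhds hD
    simpa using h0.add tendsto_const_nhds
  have hle : ∀ᶠ k : ℕ in atTop,
      (∑ i ∈ Finset.Icc 1 k, Y i ω) / ((k : ℝ) * Real.log k) ≤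
        C / ((k : ℝ) * Real.log k) + 2 / L := by
    filter_upwards [eventually_ge_atTop (max N 2)] with k hk
    have hkN : N ≤ k := le_trans (le_max_left _ _) hk
    have hk2 : 2 ≤ k := le_trans (le_max_right _ _) hk
    have hk1 : (1 : ℝ) < (k : ℝ) := by exact_mod_cast Nat.lt_of_lt_of_le one_lt_two hk2
    have hk0 : (0 : ℝ) < (k : ℝ) := lt_trans one_pos hk1
    have hlogk : 0 < Real.log k := Real.log_pos hk1
    have hDpos : 0 < (k : ℝ) * Real.log k := mul_pos hk0 hlogk
    have hsplit : ∑ i ∈ Finset.Icc 1 k, Y i ω = C + ∑ i ∈ Finset.Ioc N k, Y i ω := by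
      rw [hC, show (1 : ℕ) = 0 + 1 from rfl, Finset.Icc_add_one_left_eq_Ioc, Finset.Icc_add_one_left_eq_Ioc,
        Finset.sum_Ioc_consecutive _ (Nat.zero_le N) hkN]
    have htail2 : ∑ i ∈ Finset.Ioc N k, Y i ω ≤ (k : ℝ) * (2 / L * Real.log k) := by
      calc ∑ i ∈ Finset.Ioc N k, Y i ω ≤ ∑ _i ∈ Finset.Ioc N k, (2 / L * Real.log k) := by
            apply Finset.sum_le_sum
            intro i hi
            obtain ⟨hi1, hi2⟩ := Finset.mem_Ioc.mp hi
            refine (hNle i (le_of_lt hi1)).trans ?_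
            apply mul_le_mul_of_nonneg_left _ (by positivity)
            have hi0 : (0:ℝ) < (i:ℝ) := by
              exact_mod_cast Nat.lt_of_le_of_lt (Nat.zero_le N) hi1
            exact Real.log_le_log hi0 (by exact_mod_cast hi2)
        _ = ((k - N : ℕ) : ℝ) * (2 / L * Real.log k) := by
            rw [Finset.sum_const, Nat.card_Ioc, nsmul_eq_mul]
        _ ≤ (k : ℝ) * (2 / L * Real.log k) := by
            apply mul_le_mul_of_nonneg_right _ (by positivity)
            exact_mod_cast Nat.sub_le k N
    have hnum : ∑ i ∈ Finset.Icc 1 k, Y i ω ≤ C + (k : ℝ) * (2 / L * Real.log k) := by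
      rw [hsplit]; linarith
    calc (∑ i ∈ Finset.Icc 1 k, Y i ω) / ((k : ℝ) * Real.log k)
        ≤ (C + (k : ℝ) * (2 / L * Real.log k)) / ((k : ℝ) * Real.log k) := by
          exact (div_le_div_iff_of_pos_right hDpos).mpr hnum
      _ = C / ((k : ℝ) * Real.log k) + 2 / L := by
          field_simp
  have hcb : IsCoboundedUnder (· ≤ ·) atTop
      (fun k : ℕ => (∑ i ∈ Finset.Icc 1 k, Y i ω) / ((k : ℝ) * Real.log k)) := by
    apply isCoboundedUnder_le_of_eventually_le atTop (x := 0)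
    filter_upwards [eventually_ge_atTop 1] with k hk
    apply div_nonneg
    · exact Finset.sum_nonneg fun i _ => hnonneg i ω
    · have : (1 : ℝ) ≤ (k : ℝ) := by exact_mod_cast hk
      have := Real.log_nonneg this
      positivity
  calc Filter.limsup (fun k : ℕ => (∑ i ∈ Finset.Icc 1 k, Y i ω) / ((k : ℝ) * Real.log k)) atTop
      ≤ Filter.limsup (fun k : ℕ => C / ((k : ℝ) * Real.log k) + 2 / L) atTop :=
        limsup_le_limsup hle hcb hg.isBoundedUnder_le
    _ = 2 / L := hg.limsup_eq
end

section
/- Let ν : ℝ → ℝ be defined by ν(α) = E[log ∑_{i ∈ I} r_i^α], where I is a random finite nonempty index set and r_i are random variables taking values in [r_inf, r_sup] with 0 < r_inf ≤ r_sup < 1, the number of indices is bounded between N_inf ≥ 3 and N_sup < ∞, and all relevant expectations are finite. Then ν is strictly decreasing and Lipschitz, ν(0) > 0, and there exists a unique α₀ > 0 with ν(α₀) = 0. -/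
open MeasureTheory Filter

theorem stmt5 {Ω ι : Type*} [MeasurableSpace Ω] (P : Measure Ω) [IsProbabilityMeasure P]
    (I : Ω → Finset ι) (r : ι → Ω → ℝ) (rinf rsup : ℝ) (Ninf Nsup : ℕ)
    (hrinf : 0 < rinf) (hrr : rinf ≤ rsup) (hrsup : rsup < 1)
    (hNinf : 3 ≤ Ninf) (hcard : ∀ ω, Ninf ≤ (I ω).card ∧ (I ω).card ≤ Nsup)
    (hr : ∀ ω, ∀ i ∈ I ω, rinf ≤ r i ω ∧ r i ω ≤ rsup)
    (ν : ℝ → ℝ)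
    (hν : ∀ α : ℝ, ν α = ∫ ω, Real.log (∑ i ∈ I ω, r i ω ^ α) ∂P)
    (hint : ∀ α : ℝ, Integrable (fun ω => Real.log (∑ i ∈ I ω, r i ω ^ α)) P) :
    StrictAnti ν ∧ (∃ Klip : NNReal, LipschitzWith Klip ν) ∧ 0 < ν 0 ∧
      ∃! α₀ : ℝ, 0 < α₀ ∧ ν α₀ = 0 := by
  have hrsup0 : 0 < rsup := lt_of_lt_of_le hrinf hrr
  have hne : ∀ ω, (I ω).Nonempty := by
    intro ω
    rw [← Finset.card_pos]
    exact lt_of_lt_of_le (by omega) (hcard ω).1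
  have hrpos : ∀ ω, ∀ i ∈ I ω, 0 < r i ω := fun ω i hi =>
    lt_of_lt_of_le hrinf (hr ω i hi).1
  have hSpos : ∀ (γ : ℝ) ω, 0 < ∑ i ∈ I ω, r i ω ^ γ := by
    intro γ ω
    exact Finset.sum_pos (fun i hi => Real.rpow_pos_of_pos (hrpos ω i hi) γ) (hne ω)
  -- pointwise key bounds
  have hptU : ∀ (α β : ℝ), α ≤ β → ∀ ω,
      Real.log (∑ i ∈ I ω, r i ω ^ β) ≤
        (β - α) * Real.log rsup + Real.log (∑ i ∈ I ω, r i ω ^ α) := by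
    intro α β hab ω
    have hsum : (∑ i ∈ I ω, r i ω ^ β) ≤ rsup ^ (β - α) * ∑ i ∈ I ω, r i ω ^ α := by
      rw [Finset.mul_sum]
      refine Finset.sum_le_sum (fun i hi => ?_)
      have h0 := hrpos ω i hi
      have : r i ω ^ β = r i ω ^ (β - α) * r i ω ^ α := by
        rw [← Real.rpow_add h0]; ring_nf
      rw [this]
      exact mul_le_mul_of_nonneg_right
        (Real.rpow_le_rpow h0.le (hr ω i hi).2 (sub_nonneg.2 hab))
        (Real.rpow_nonneg h0.le α)
    calc Real.log (∑ i ∈ I ω, r i ω ^ β)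
        ≤ Real.log (rsup ^ (β - α) * ∑ i ∈ I ω, r i ω ^ α) :=
          Real.log_le_log (hSpos β ω) hsum
      _ = (β - α) * Real.log rsup + Real.log (∑ i ∈ I ω, r i ω ^ α) := by
          rw [Real.log_mul (ne_of_gt (Real.rpow_pos_of_pos hrsup0 _)) (ne_of_gt (hSpos α ω)),
            Real.log_rpow hrsup0]
  have hptL : ∀ (α β : ℝ), α ≤ β → ∀ ω,
      (β - α) * Real.log rinf + Real.log (∑ i ∈ I ω, r i ω ^ α) ≤
        Real.log (∑ i ∈ I ω, r i ω ^ β) := by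
    intro α β hab ω
    have hsum : rinf ^ (β - α) * ∑ i ∈ I ω, r i ω ^ α ≤ ∑ i ∈ I ω, r i ω ^ β := by
      rw [Finset.mul_sum]
      refine Finset.sum_le_sum (fun i hi => ?_)
      have h0 := hrpos ω i hi
      have heq : r i ω ^ β = r i ω ^ (β - α) * r i ω ^ α := by
        rw [← Real.rpow_add h0]; ring_nf
      rw [heq]
      exact mul_le_mul_of_nonneg_right
        (Real.rpow_le_rpow hrinf.le (hr ω i hi).1 (sub_nonneg.2 hab))
        (Real.rpow_nonneg h0.le α)
    calc (β - α) * Real.log rinf + Real.log (∑ i ∈ I ω, r i ω ^ α)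
        = Real.log (rinf ^ (β - α) * ∑ i ∈ I ω, r i ω ^ α) := by
          rw [Real.log_mul (ne_of_gt (Real.rpow_pos_of_pos hrinf _)) (ne_of_gt (hSpos α ω)),
            Real.log_rpow hrinf]
      _ ≤ Real.log (∑ i ∈ I ω, r i ω ^ β) := Real.log_le_log (mul_pos (Real.rpow_pos_of_pos hrinf _) (hSpos α ω)) hsum
  -- integrated key bounds
  have keyU : ∀ α β : ℝ, α ≤ β → ν β ≤ (β - α) * Real.log rsup + ν α := by
    intro α β hab
    rw [hν β, hν α]
    calc (∫ ω, Real.log (∑ i ∈ I ω, r i ω ^ β) ∂P)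
        ≤ ∫ ω, ((β - α) * Real.log rsup + Real.log (∑ i ∈ I ω, r i ω ^ α)) ∂P :=
          integral_mono (hint β) ((integrable_const _).add (hint α)) (hptU α β hab)
      _ = (β - α) * Real.log rsup + ∫ ω, Real.log (∑ i ∈ I ω, r i ω ^ α) ∂P := by
          rw [integral_add (integrable_const _) (hint α), integral_const]
          simp
  have keyL : ∀ α β : ℝ, α ≤ β → (β - α) * Real.log rinf + ν α ≤ ν β := by
    intro α β hab
    rw [hν β, hν α]
    calc (β - α) * Real.log rinf + ∫ ω, Real.log (∑ i ∈ I ω, r i ω ^ α) ∂P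
        = ∫ ω, ((β - α) * Real.log rinf + Real.log (∑ i ∈ I ω, r i ω ^ α)) ∂P := by
          rw [integral_add (integrable_const _) (hint α), integral_const]
          simp
      _ ≤ ∫ ω, Real.log (∑ i ∈ I ω, r i ω ^ β) ∂P :=
          integral_mono ((integrable_const _).add (hint α)) (hint β) (hptL α β hab)
  have hlogsup : Real.log rsup < 0 := Real.log_neg hrsup0 hrsup
  have hloginf : Real.log rinf < 0 := Real.log_neg hrinf (lt_of_le_of_lt hrr hrsup)
  have hanti : StrictAnti ν := by
    intro a b hab
    have h := keyU a b hab.le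
    have : (b - a) * Real.log rsup < 0 :=
      mul_neg_of_pos_of_neg (sub_pos.2 hab) hlogsup
    linarith
  have hlip : LipschitzWith ‖Real.log rinf‖₊ ν := by
    apply LipschitzWith.of_dist_le_mul
    have key : ∀ a b : ℝ, a ≤ b → dist (ν a) (ν b) ≤ ‖Real.log rinf‖₊ * dist a b := by
      intro a b hab
      have h1 := keyU a b hab
      have h2 := keyL a b hab
      have hba : (0:ℝ) ≤ b - a := sub_nonneg.2 hab
      have hub : ν b ≤ ν a := by nlinarith
      rw [Real.dist_eq, Real.dist_eq, abs_of_nonneg (sub_nonneg.2 hub),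
        abs_of_nonpos (by linarith : a - b ≤ 0)]
      have hnn : (‖Real.log rinf‖₊ : ℝ) = -Real.log rinf := by
        rw [coe_nnnorm, Real.norm_eq_abs, abs_of_neg hloginf]
      rw [hnn]
      nlinarith
    intro a b
    rcases le_total a b with h | h
    · exact key a b h
    · rw [dist_comm (ν a), dist_comm a]; exact key b a h
  have h0 : 0 < ν 0 := by
    have hpt0 : ∀ ω, Real.log 3 ≤ Real.log (∑ i ∈ I ω, r i ω ^ (0:ℝ)) := by
      intro ω
      have : (∑ i ∈ I ω, r i ω ^ (0:ℝ)) = ((I ω).card : ℝ) := by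
        simp [Real.rpow_zero]
      rw [this]
      apply Real.log_le_log (by norm_num)
      have := (hcard ω).1
      have : (3:ℝ) ≤ (Ninf : ℝ) := by exact_mod_cast hNinf
      have h2 : (Ninf : ℝ) ≤ ((I ω).card : ℝ) := by exact_mod_cast (hcard ω).1
      linarith
    have : Real.log 3 ≤ ν 0 := by
      rw [hν 0]
      calc Real.log 3 = ∫ _ω, Real.log 3 ∂P := by simp
        _ ≤ _ := integral_mono (integrable_const _) (hint 0) hpt0
    have h3 : 0 < Real.log 3 := Real.log_pos (by norm_num)
    linarith
  refine ⟨hanti, ⟨_, hlip⟩, h0, ?_⟩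
  -- existence of zero
  have hcont : Continuous ν := hlip.continuous
  set c : ℝ := -Real.log rsup with hc
  have hcpos : 0 < c := by simpa [hc] using neg_pos.2 hlogsup
  set α₁ : ℝ := ν 0 / c + 1 with hα₁
  have hα₁pos : 0 < α₁ := by positivity
  have hνα₁ : ν α₁ < 0 := by
    have h := keyU 0 α₁ hα₁pos.le
    have : (α₁ - 0) * Real.log rsup = -(α₁ * c) := by rw [hc]; ring
    rw [this] at h
    have : α₁ * c = ν 0 + c := by
      rw [hα₁, add_mul, one_mul, div_mul_cancel₀ _ hcpos.ne']
    linarith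
  have : (0:ℝ) ∈ Set.Ioo (ν α₁) (ν 0) := ⟨hνα₁, h0⟩
  have hsub := intermediate_value_Ioo' hα₁pos.le hcont.continuousOn
  obtain ⟨x, hx, hνx⟩ := hsub this
  exact ⟨x, ⟨hx.1, hνx⟩, fun y hy => hanti.injective (by rw [hy.2, hνx])⟩
end
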